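/- arXiv:1903.04268 — 2 statements merged into one kernel-verified Lean document; each statement's English description precedes it below -/
import Mathlib

section
/- (Variance bound for the isotropic ES estimator, explicit constants.) The variance Var[z_ES] := E_{g~N(0,I_d)}‖z_ES(g)‖² − ‖E_{g~N(0,I_d)}[z_ES(g)]‖² satisfies |Var[z_ES] − (d+1)·‖∇F(θ)‖²| ≤ 210·τ²·σ⁴·d⁴ + 6·τ·σ²·L·d² + 30·τ·σ²·L·d³. -/
open MeasureTheory ProbabilityTheory
open scoped RealInnerProductSpace

/-- The standard Gaussian measure `N(0, I_n)` on `ℝ^n`. -/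
noncomputable def stdGaussian (n : ℕ) : Measure (EuclideanSpace ℝ (Fin n)) :=
  (Measure.pi (fun _ => gaussianReal 0 1)).map (MeasurableEquiv.toLp 2 (Fin n → ℝ))

noncomputable section ESAux

open Real Filter
open scoped ENNReal NNReal

noncomputable section ESAux

/-- abs bound for x^n * gaussian -/
lemma es_pow_gauss_bound (n : ℕ) (x : ℝ) :
    |x ^ n * Real.exp (-(2⁻¹) * x ^ 2)| ≤ (n.factorial * Real.exp 1) * Real.exp (-(4⁻¹) * x ^ 2) := by
  have h1 : |x| ^ n ≤ n.factorial * Real.exp |x| := by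
    have := Real.pow_div_factorial_le_exp (x := |x|) (abs_nonneg x) n
    have hf : (0:ℝ) < n.factorial := by positivity
    calc |x| ^ n = (|x| ^ n / n.factorial) * n.factorial := by field_simp
    _ ≤ Real.exp |x| * n.factorial := by
        apply mul_le_mul_of_nonneg_right this hf.le
    _ = n.factorial * Real.exp |x| := mul_comm _ _
  have h2 : |x| ≤ 1 + (4⁻¹) * x ^ 2 := by nlinarith [sq_nonneg (|x| - 2), sq_abs x, abs_nonneg x]
  have h3 : Real.exp |x| ≤ Real.exp 1 * Real.exp ((4⁻¹) * x ^ 2) := by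
    rw [← Real.exp_add]; exact Real.exp_le_exp.mpr h2
  calc |x ^ n * Real.exp (-(2⁻¹) * x ^ 2)|
      = |x| ^ n * Real.exp (-(2⁻¹) * x ^ 2) := by
        rw [abs_mul, abs_pow, Real.abs_exp]
    _ ≤ (n.factorial * (Real.exp 1 * Real.exp ((4⁻¹) * x ^ 2))) * Real.exp (-(2⁻¹) * x ^ 2) := by
        apply mul_le_mul_of_nonneg_right (h1.trans (by
          have hf : (0:ℝ) ≤ n.factorial := by positivity
          exact mul_le_mul_of_nonneg_left h3 hf)) (Real.exp_nonneg _)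
    _ = (n.factorial * Real.exp 1) * (Real.exp ((4⁻¹) * x ^ 2) * Real.exp (-(2⁻¹) * x ^ 2)) := by
        ring
    _ = (n.factorial * Real.exp 1) * Real.exp (-(4⁻¹) * x ^ 2) := by
        rw [← Real.exp_add]; congr 2; ring

lemma es_integrable_pow_gauss (n : ℕ) :
    Integrable (fun x : ℝ => x ^ n * Real.exp (-(2⁻¹) * x ^ 2)) := by
  refine Integrable.mono' (((integrable_exp_neg_mul_sq (by norm_num : (0:ℝ) < 4⁻¹))).const_mul
    (n.factorial * Real.exp 1)) ?_ (Filter.Eventually.of_forall fun x => ?_)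
  · exact ((continuous_pow n).mul (by fun_prop)).aestronglyMeasurable
  · rw [Real.norm_eq_abs]; exact es_pow_gauss_bound n x

lemma es_tendsto_gauss (n : ℕ) (l : Filter ℝ)
    (hl : Tendsto (fun x : ℝ => -(4⁻¹) * x ^ 2) l atBot) :
    Tendsto (fun x : ℝ => x ^ n * Real.exp (-(2⁻¹) * x ^ 2)) l (nhds 0) := by
  apply squeeze_zero_norm (fun x => es_pow_gauss_bound n x)
  have : Tendsto (fun x : ℝ => Real.exp (-(4⁻¹) * x ^ 2)) l (nhds 0) :=
    Real.tendsto_exp_atBot.comp hl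
  simpa using this.const_mul (n.factorial * Real.exp 1 : ℝ)

lemma es_sq_atTop : Tendsto (fun x : ℝ => -(4⁻¹) * x ^ 2) atTop atBot := by
  have h2 : Tendsto (fun x : ℝ => (4:ℝ)⁻¹ * x ^ 2) atTop atTop :=
    (tendsto_pow_atTop (two_ne_zero)).const_mul_atTop (by norm_num)
  simpa [Function.comp_def, neg_mul] using (tendsto_neg_atTop_atBot (G := ℝ)).comp h2

lemma es_sq_atBot : Tendsto (fun x : ℝ => -(4⁻¹) * x ^ 2) atBot atBot := by
  have hsq : Tendsto (fun x : ℝ => x ^ 2) atBot atTop := by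
    have := (tendsto_pow_atTop (n := 2) (two_ne_zero)).comp (tendsto_neg_atBot_atTop (G := ℝ))
    simpa [Function.comp_def] using this
  have h2 : Tendsto (fun x : ℝ => (4:ℝ)⁻¹ * x ^ 2) atBot atTop :=
    hsq.const_mul_atTop (by norm_num)
  simpa [Function.comp_def, neg_mul] using (tendsto_neg_atTop_atBot (G := ℝ)).comp h2

/-- The unnormalized Gaussian moment. -/
def esG (n : ℕ) : ℝ := ∫ x : ℝ, x ^ n * Real.exp (-(2⁻¹) * x ^ 2)

lemma esG_zero : esG 0 = Real.sqrt (2 * π) := by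
  have := integral_gaussian (2⁻¹)
  simp only [esG, pow_zero, one_mul]
  rw [this]
  rw [show π / 2⁻¹ = 2 * π by field_simp]

lemma esG_rec (n : ℕ) : esG (n + 2) = (n + 1) * esG n := by
  have hderiv : ∀ x : ℝ, HasDerivAt (fun x : ℝ => x ^ (n+1) * Real.exp (-(2⁻¹) * x ^ 2))
      ((n+1) * x ^ n * Real.exp (-(2⁻¹) * x ^ 2) - x ^ (n+2) * Real.exp (-(2⁻¹) * x ^ 2)) x := by
    intro x
    have h1 : HasDerivAt (fun x : ℝ => x ^ (n+1)) ((n+1) * x ^ n) x := by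
      simpa using hasDerivAt_pow (n+1) x
    have h2 : HasDerivAt (fun x : ℝ => Real.exp (-(2⁻¹) * x ^ 2))
        (Real.exp (-(2⁻¹) * x ^ 2) * (-(2⁻¹) * (2 * x))) x := by
      have hx : HasDerivAt (fun x : ℝ => -(2⁻¹) * x ^ 2) (-(2⁻¹) * (2 * x)) x := by
        simpa using ((hasDerivAt_pow 2 x).const_mul (-(2⁻¹):ℝ))
      exact (Real.hasDerivAt_exp _).comp x hx
    have := h1.mul h2
    exact this.congr_deriv (by ring)
  have hint : Integrable (fun x : ℝ => (n+1) * x ^ n * Real.exp (-(2⁻¹) * x ^ 2)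
      - x ^ (n+2) * Real.exp (-(2⁻¹) * x ^ 2)) := by
    apply Integrable.sub _ (es_integrable_pow_gauss (n+2))
    simpa [mul_assoc] using (es_integrable_pow_gauss n).const_mul ((n:ℝ)+1)
  have h0 := MeasureTheory.integral_of_hasDerivAt_of_tendsto hderiv hint
    (es_tendsto_gauss (n+1) atBot es_sq_atBot) (es_tendsto_gauss (n+1) atTop es_sq_atTop)
  rw [sub_zero] at h0
  have h0' : ((0:ℝ)) = ((n:ℝ)+1) * esG n - esG (n+2) := by
    rw [← h0]
    rw [integral_sub _ (es_integrable_pow_gauss (n+2))]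
    · unfold esG
      congr 1
      rw [← integral_const_mul]
      exact integral_congr_ae (Filter.Eventually.of_forall fun x => by ring)
    · simpa [mul_assoc] using (es_integrable_pow_gauss n).const_mul ((n:ℝ)+1)
  linarith

lemma esG_one : esG 1 = 0 := by
  have hderiv : ∀ x : ℝ, HasDerivAt (fun x : ℝ => -Real.exp (-(2⁻¹) * x ^ 2))
      (x ^ 1 * Real.exp (-(2⁻¹) * x ^ 2)) x := by
    intro x
    have h2 : HasDerivAt (fun x : ℝ => Real.exp (-(2⁻¹) * x ^ 2))
        (Real.exp (-(2⁻¹) * x ^ 2) * (-(2⁻¹) * (2 * x))) x := by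
      have hx : HasDerivAt (fun x : ℝ => -(2⁻¹) * x ^ 2) (-(2⁻¹) * (2 * x)) x := by
        simpa using ((hasDerivAt_pow 2 x).const_mul (-(2⁻¹):ℝ))
      exact (Real.hasDerivAt_exp _).comp x hx
    have := h2.neg
    exact this.congr_deriv (by ring)
  have htop : Tendsto (fun x : ℝ => -Real.exp (-(2⁻¹) * x ^ 2)) atTop (nhds 0) := by
    simpa using (es_tendsto_gauss 0 atTop es_sq_atTop).neg
  have hbot : Tendsto (fun x : ℝ => -Real.exp (-(2⁻¹) * x ^ 2)) atBot (nhds 0) := by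
    simpa using (es_tendsto_gauss 0 atBot es_sq_atBot).neg
  have h0 := MeasureTheory.integral_of_hasDerivAt_of_tendsto hderiv
    (es_integrable_pow_gauss 1) hbot htop
  simpa [esG] using h0


/-- Gaussian moments. -/
def gm (n : ℕ) : ℝ := ∫ x : ℝ, x ^ n ∂(gaussianReal 0 1)

lemma es_pdf_eq (x : ℝ) :
    gaussianPDFReal 0 1 x = (Real.sqrt (2 * π))⁻¹ * Real.exp (-(2⁻¹) * x ^ 2) := by
  rw [gaussianPDFReal]
  simp only [NNReal.coe_one, mul_one, sub_zero]
  congr 1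
  exact congrArg Real.exp (by ring)

lemma es_gaussianReal_eq : gaussianReal 0 1 = volume.withDensity (gaussianPDF 0 1) :=
  gaussianReal_of_var_ne_zero 0 one_ne_zero

lemma es_integrable_pow_gm (n : ℕ) : Integrable (fun x : ℝ => x ^ n) (gaussianReal 0 1) := by
  rw [es_gaussianReal_eq]
  rw [integrable_withDensity_iff (measurable_gaussianPDF 0 1)
    (Filter.Eventually.of_forall fun x => ENNReal.ofReal_lt_top)]
  have : ∀ x : ℝ, x ^ n * (gaussianPDF 0 1 x).toReal
      = (Real.sqrt (2 * π))⁻¹ * (x ^ n * Real.exp (-(2⁻¹) * x ^ 2)) := by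
    intro x
    rw [gaussianPDF, ENNReal.toReal_ofReal (gaussianPDFReal_nonneg 0 1 x), es_pdf_eq]
    ring
  simp_rw [this]
  exact (es_integrable_pow_gauss n).const_mul _

lemma es_gm_eq (n : ℕ) : gm n = (Real.sqrt (2 * π))⁻¹ * esG n := by
  rw [gm, es_gaussianReal_eq,
    show gaussianPDF 0 1 = (fun x => ((gaussianPDFReal 0 1 x).toNNReal : ℝ≥0∞)) from rfl,
    integral_withDensity_eq_integral_smul ((measurable_gaussianPDFReal 0 1).real_toNNReal) _]
  have : ∀ x : ℝ, ((gaussianPDFReal 0 1 x).toNNReal : ℝ≥0) • x ^ n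
      = (Real.sqrt (2 * π))⁻¹ * (x ^ n * Real.exp (-(2⁻¹) * x ^ 2)) := by
    intro x
    rw [NNReal.smul_def, smul_eq_mul, Real.coe_toNNReal _ (gaussianPDFReal_nonneg 0 1 x), es_pdf_eq]
    ring
  simp_rw [this]
  exact integral_const_mul _ _

lemma es_sqrt_two_pi_ne : Real.sqrt (2 * π) ≠ 0 := by
  have : (0:ℝ) < 2 * π := by positivity
  positivity

lemma gm_zero : gm 0 = 1 := by
  rw [es_gm_eq, esG_zero, inv_mul_cancel₀ es_sqrt_two_pi_ne]

lemma gm_one : gm 1 = 0 := by rw [es_gm_eq, esG_one, mul_zero]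

lemma gm_rec (n : ℕ) : gm (n + 2) = ((n:ℝ) + 1) * gm n := by
  rw [es_gm_eq, es_gm_eq, esG_rec]; ring

lemma gm_two : gm 2 = 1 := by have := gm_rec 0; rw [gm_zero] at this; norm_num at this; exact this

lemma gm_three : gm 3 = 0 := by have := gm_rec 1; rw [gm_one] at this; norm_num at this; exact this

lemma gm_four : gm 4 = 3 := by have := gm_rec 2; rw [gm_two] at this; norm_num at this; exact this

lemma gm_six : gm 6 = 15 := by have := gm_rec 4; rw [gm_four] at this; norm_num at this; exact this

/-! ### Integration of monomials over the standard Gaussian in `ℝ^d` -/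

variable {d : ℕ}

lemma es_integrable_monomial (k : Fin d → ℕ) :
    Integrable (fun g : EuclideanSpace ℝ (Fin d) => ∏ i, (g i) ^ (k i)) (stdGaussian d) := by
  unfold _root_.stdGaussian
  rw [integrable_map_equiv]
  exact Integrable.fintype_prod (f := fun i x => x ^ k i) (fun i => es_integrable_pow_gm (k i))

lemma es_integral_monomial (k : Fin d → ℕ) :
    ∫ g : EuclideanSpace ℝ (Fin d), ∏ i, (g i) ^ (k i) ∂(stdGaussian d) = ∏ i, gm (k i) := by
  unfold _root_.stdGaussian
  rw [integral_map_equiv]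
  exact integral_fin_nat_prod_eq_prod (f := fun i x => x ^ k i)

lemma es_prod_pow_single (g : EuclideanSpace ℝ (Fin d)) (m : Fin d) (n : ℕ) :
    ∏ l, (g l) ^ (if l = m then n else 0) = (g m) ^ n := by
  have : ∀ l : Fin d, (g l) ^ (if l = m then n else 0) = if l = m then (g l) ^ n else 1 := by
    intro l; split <;> simp
  simp only [this]
  simp [Finset.prod_ite_eq']

lemma es_coord_integrable (i : Fin d) (n : ℕ) :
    Integrable (fun g : EuclideanSpace ℝ (Fin d) => (g i) ^ n) (stdGaussian d) := by
  have := es_integrable_monomial (fun l => if l = i then n else 0)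
  exact this.congr (Filter.Eventually.of_forall fun g => es_prod_pow_single g i n)

lemma es_coord_integral (i : Fin d) (n : ℕ) :
    ∫ g : EuclideanSpace ℝ (Fin d), (g i) ^ n ∂(stdGaussian d) = gm n := by
  have h := es_integral_monomial (fun l => if l = i then n else 0)
  have h2 : (∫ g : EuclideanSpace ℝ (Fin d), (g i) ^ n ∂(stdGaussian d))
      = ∫ g : EuclideanSpace ℝ (Fin d), ∏ l, (g l) ^ (if l = i then n else 0) ∂(stdGaussian d) :=
    integral_congr_ae (Filter.Eventually.of_forall fun g => (es_prod_pow_single g i n).symm)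
  rw [h2, h]
  have : ∀ l : Fin d, gm (if l = i then n else 0) = if l = i then gm n else 1 := by
    intro l; split <;> simp [gm_zero]
  simp only [this]
  simp [Finset.prod_ite_eq']

lemma es_pair_eq (g : EuclideanSpace ℝ (Fin d)) (i j : Fin d) :
    g i * g j = ∏ l, (g l) ^ ((if l = i then 1 else 0) + (if l = j then 1 else 0)) := by
  simp only [pow_add]
  rw [Finset.prod_mul_distrib]
  rw [es_prod_pow_single g i 1, es_prod_pow_single g j 1, pow_one, pow_one]

lemma es_integrable_pair (i j : Fin d) :
    Integrable (fun g : EuclideanSpace ℝ (Fin d) => g i * g j) (stdGaussian d) := by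
  have := es_integrable_monomial (fun l => (if l = i then 1 else 0) + (if l = j then 1 else 0))
  exact this.congr (Filter.Eventually.of_forall fun g => (es_pair_eq g i j).symm)

lemma es_integral_pair (i j : Fin d) :
    ∫ g : EuclideanSpace ℝ (Fin d), g i * g j ∂(stdGaussian d) = if i = j then 1 else 0 := by
  have h2 : (∫ g : EuclideanSpace ℝ (Fin d), g i * g j ∂(stdGaussian d))
      = ∫ g : EuclideanSpace ℝ (Fin d),
          ∏ l, (g l) ^ ((if l = i then 1 else 0) + (if l = j then 1 else 0)) ∂(stdGaussian d) :=
    integral_congr_ae (Filter.Eventually.of_forall fun g => es_pair_eq g i j)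
  rw [h2, es_integral_monomial]
  by_cases h : i = j
  · subst h
    rw [if_pos rfl]
    apply Finset.prod_eq_one
    intro l _
    by_cases hl : l = i <;> simp [hl, gm_zero, gm_two]
  · rw [if_neg h]
    apply Finset.prod_eq_zero (Finset.mem_univ i)
    simp [h, gm_one]

lemma es_triple_eq (g : EuclideanSpace ℝ (Fin d)) (i j k : Fin d) :
    g i * g j * (g k) ^ 2 = ∏ l, (g l) ^
      ((if l = i then 1 else 0) + (if l = j then 1 else 0) + (if l = k then 2 else 0)) := by
  simp only [pow_add]
  rw [Finset.prod_mul_distrib, Finset.prod_mul_distrib]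
  rw [es_prod_pow_single g i 1, es_prod_pow_single g j 1, es_prod_pow_single g k 2,
    pow_one, pow_one]

lemma es_integrable_triple (i j k : Fin d) :
    Integrable (fun g : EuclideanSpace ℝ (Fin d) => g i * g j * (g k) ^ 2) (stdGaussian d) := by
  have := es_integrable_monomial
    (fun l => (if l = i then 1 else 0) + (if l = j then 1 else 0) + (if l = k then 2 else 0))
  exact this.congr (Filter.Eventually.of_forall fun g => (es_triple_eq g i j k).symm)

lemma es_integral_triple (i j k : Fin d) :
    ∫ g : EuclideanSpace ℝ (Fin d), g i * g j * (g k) ^ 2 ∂(stdGaussian d)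
      = if i = j then (if i = k then 3 else 1) else 0 := by
  have h2 : (∫ g : EuclideanSpace ℝ (Fin d), g i * g j * (g k) ^ 2 ∂(stdGaussian d))
      = ∫ g : EuclideanSpace ℝ (Fin d), ∏ l, (g l) ^
          ((if l = i then 1 else 0) + (if l = j then 1 else 0) + (if l = k then 2 else 0))
          ∂(stdGaussian d) :=
    integral_congr_ae (Filter.Eventually.of_forall fun g => es_triple_eq g i j k)
  rw [h2, es_integral_monomial]
  by_cases hij : i = j
  · subst hij
    rw [if_pos rfl]
    by_cases hik : i = k
    · subst hik
      rw [if_pos rfl]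
      rw [Finset.prod_eq_single i]
      · simp [gm_four]
      · intro l _ hl
        simp [hl, gm_zero]
      · intro h; exact absurd (Finset.mem_univ i) h
    · rw [if_neg hik]
      apply Finset.prod_eq_one
      intro l _
      by_cases hl : l = i
      · subst hl
        simp [fun h => hik h, gm_two]
      · by_cases hlk : l = k <;> simp [hl, hlk, Ne.symm hik, gm_zero, gm_two]
  · rw [if_neg hij]
    apply Finset.prod_eq_zero (Finset.mem_univ i)
    by_cases hik : i = k
    · subst hik
      simp [hij, gm_three]
    · simp [hij, hik, gm_one]

/-! ### Norm moments -/

lemma es_norm_sq (g : EuclideanSpace ℝ (Fin d)) : ‖g‖ ^ 2 = ∑ i, (g i) ^ 2 := by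
  rw [EuclideanSpace.norm_eq, Real.sq_sqrt (by positivity)]
  simp [Real.norm_eq_abs, sq_abs]

lemma es_sum_pow_integrable (m : ℕ) :
    Integrable (fun g : EuclideanSpace ℝ (Fin d) => ∑ i, (g i) ^ m) (stdGaussian d) :=
  integrable_finset_sum _ fun i _ => es_coord_integrable i m

lemma es_sum_pow_integral (m : ℕ) :
    ∫ g : EuclideanSpace ℝ (Fin d), ∑ i, (g i) ^ m ∂(stdGaussian d) = d * gm m := by
  rw [integral_finset_sum _ fun i _ => es_coord_integrable i m]
  simp [es_coord_integral, Finset.card_univ]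

lemma es_norm_pow_bound (hd : 1 ≤ d) (k : ℕ) (g : EuclideanSpace ℝ (Fin d)) :
    ‖g‖ ^ (2 * (k + 1)) ≤ (d:ℝ) ^ k * ∑ i, (g i) ^ (2 * (k + 1)) := by
  have h0 : ‖g‖ ^ (2 * (k + 1)) = (∑ i, (g i) ^ 2) ^ (k + 1) := by
    rw [pow_mul, es_norm_sq]
  have h1 := pow_sum_div_card_le_sum_pow (f := fun i : Fin d => (g i) ^ 2)
    (s := Finset.univ) (fun i _ => sq_nonneg _) k
  rw [Finset.card_univ, Fintype.card_fin] at h1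
  have hd' : (0:ℝ) < (d:ℝ) ^ k := by positivity
  rw [div_le_iff₀ hd'] at h1
  have h2 : ∀ i : Fin d, ((g i) ^ 2) ^ (k + 1) = (g i) ^ (2 * (k + 1)) := by
    intro i; rw [← pow_mul]
  rw [h0]
  calc (∑ i, (g i) ^ 2) ^ (k + 1) ≤ (∑ i, ((g i) ^ 2) ^ (k + 1)) * (d:ℝ) ^ k := h1
    _ = (d:ℝ) ^ k * ∑ i, (g i) ^ (2 * (k + 1)) := by simp_rw [h2]; ring

lemma es_norm_pow_integrable (hd : 1 ≤ d) (k : ℕ) :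
    Integrable (fun g : EuclideanSpace ℝ (Fin d) => ‖g‖ ^ (2 * (k + 1))) (stdGaussian d) := by
  refine Integrable.mono' ((es_sum_pow_integrable (2 * (k + 1))).const_mul ((d:ℝ) ^ k))
    ((continuous_norm.pow _).aestronglyMeasurable) (Filter.Eventually.of_forall fun g => ?_)
  rw [Real.norm_eq_abs, abs_of_nonneg (by positivity)]
  exact es_norm_pow_bound hd k g

lemma es_norm_pow_integral_le (hd : 1 ≤ d) (k : ℕ) :
    ∫ g : EuclideanSpace ℝ (Fin d), ‖g‖ ^ (2 * (k + 1)) ∂(stdGaussian d)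
      ≤ (d:ℝ) ^ (k + 1) * gm (2 * (k + 1)) := by
  calc ∫ g : EuclideanSpace ℝ (Fin d), ‖g‖ ^ (2 * (k + 1)) ∂(stdGaussian d)
      ≤ ∫ g : EuclideanSpace ℝ (Fin d), (d:ℝ) ^ k * ∑ i, (g i) ^ (2 * (k + 1)) ∂(stdGaussian d) :=
        integral_mono (es_norm_pow_integrable hd k)
          ((es_sum_pow_integrable (2 * (k + 1))).const_mul ((d:ℝ) ^ k))
          (es_norm_pow_bound hd k)
    _ = (d:ℝ) ^ k * ((d:ℝ) * gm (2 * (k + 1))) := by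
        rw [integral_const_mul, es_sum_pow_integral]
    _ = (d:ℝ) ^ (k + 1) * gm (2 * (k + 1)) := by ring


/-! ### Inner product integrals -/

open scoped RealInnerProductSpace in
lemma es_inner_eq (g a : EuclideanSpace ℝ (Fin d)) : ⟪g, a⟫ = ∑ i, g i * a i := by
  simp [PiLp.inner_apply, RCLike.inner_apply, conj_trivial]
  exact Finset.sum_congr rfl fun _ _ => mul_comm _ _

open scoped RealInnerProductSpace in
lemma es_integral_inner_sq (a : EuclideanSpace ℝ (Fin d)) :
    ∫ g : EuclideanSpace ℝ (Fin d), ⟪g, a⟫ ^ 2 * ‖g‖ ^ 2 ∂(stdGaussian d)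
      = ((d:ℝ) + 2) * ‖a‖ ^ 2 := by
  have hexp : ∀ g : EuclideanSpace ℝ (Fin d), ⟪g, a⟫ ^ 2 * ‖g‖ ^ 2
      = ∑ i, ∑ j, ∑ k, (a i * a j) * (g i * g j * (g k) ^ 2) := by
    intro g
    rw [es_inner_eq, es_norm_sq, sq]
    rw [Finset.sum_mul_sum]
    rw [Finset.sum_mul]
    refine Finset.sum_congr rfl fun i _ => ?_
    rw [Finset.sum_mul]
    refine Finset.sum_congr rfl fun j _ => ?_
    rw [Finset.mul_sum]
    refine Finset.sum_congr rfl fun k _ => ?_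
    ring
  have hint3 : ∀ i j k : Fin d, Integrable
      (fun g : EuclideanSpace ℝ (Fin d) => (a i * a j) * (g i * g j * (g k) ^ 2))
      (stdGaussian d) := fun i j k => (es_integrable_triple i j k).const_mul _
  have hint2 : ∀ i j : Fin d, Integrable
      (fun g : EuclideanSpace ℝ (Fin d) => ∑ k, (a i * a j) * (g i * g j * (g k) ^ 2))
      (stdGaussian d) := fun i j => integrable_finset_sum _ fun k _ => hint3 i j k
  have hint1 : ∀ i : Fin d, Integrable
      (fun g : EuclideanSpace ℝ (Fin d) => ∑ j, ∑ k, (a i * a j) * (g i * g j * (g k) ^ 2))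
      (stdGaussian d) := fun i => integrable_finset_sum _ fun j _ => hint2 i j
  calc ∫ g : EuclideanSpace ℝ (Fin d), ⟪g, a⟫ ^ 2 * ‖g‖ ^ 2 ∂(stdGaussian d)
      = ∫ g : EuclideanSpace ℝ (Fin d),
          ∑ i, ∑ j, ∑ k, (a i * a j) * (g i * g j * (g k) ^ 2) ∂(stdGaussian d) :=
        integral_congr_ae (Filter.Eventually.of_forall hexp)
    _ = ∑ i, ∑ j, ∑ k, (a i * a j) *
          (if i = j then (if i = k then (3:ℝ) else 1) else 0) := by
        rw [integral_finset_sum _ fun i _ => hint1 i]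
        refine Finset.sum_congr rfl fun i _ => ?_
        rw [integral_finset_sum _ fun j _ => hint2 i j]
        refine Finset.sum_congr rfl fun j _ => ?_
        rw [integral_finset_sum _ fun k _ => hint3 i j k]
        refine Finset.sum_congr rfl fun k _ => ?_
        rw [integral_const_mul, es_integral_triple]
    _ = ((d:ℝ) + 2) * ‖a‖ ^ 2 := by
        have hk : ∀ i j : Fin d, (∑ k, (a i * a j) *
            (if i = j then (if i = k then (3:ℝ) else 1) else 0))
            = if i = j then (a i * a j) * ((d:ℝ) + 2) else 0 := by
          intro i j
          by_cases h : i = j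
          · subst h
            simp only [eq_self_iff_true, if_true]
            rw [← Finset.mul_sum]
            congr 1
            have h3 : ∀ k : Fin d, (if i = k then (3:ℝ) else 1)
                = (if i = k then (2:ℝ) else 0) + 1 := by
              intro k; split <;> norm_num
            simp_rw [h3]
            rw [Finset.sum_add_distrib, Finset.sum_ite_eq, if_pos (Finset.mem_univ i),
              Finset.sum_const, Finset.card_univ, Fintype.card_fin]
            simp
            ring
          · simp [h]
        simp_rw [hk]
        have hj : ∀ i : Fin d, (∑ j, if i = j then (a i * a j) * ((d:ℝ) + 2) else 0)
            = a i * a i * ((d:ℝ) + 2) := by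
          intro i
          rw [Finset.sum_ite_eq, if_pos (Finset.mem_univ i)]
        simp_rw [hj]
        rw [← Finset.sum_mul, es_norm_sq]
        simp_rw [sq]
        ring

lemma es_integrable_norm_sq :
    Integrable (fun g : EuclideanSpace ℝ (Fin d) => ‖g‖ ^ 2) (stdGaussian d) :=
  (es_sum_pow_integrable 2).congr
    (Filter.Eventually.of_forall fun g => (es_norm_sq g).symm)

open scoped RealInnerProductSpace in
lemma es_integrable_inner_smul (a : EuclideanSpace ℝ (Fin d)) :
    Integrable (fun g : EuclideanSpace ℝ (Fin d) => ⟪g, a⟫ • g) (stdGaussian d) := by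
  refine Integrable.mono' (es_integrable_norm_sq.const_mul ‖a‖)
    ((by fun_prop : Continuous fun g : EuclideanSpace ℝ (Fin d) => ⟪g, a⟫ • g).aestronglyMeasurable)
    (Filter.Eventually.of_forall fun g => ?_)
  rw [norm_smul, Real.norm_eq_abs]
  calc |⟪g, a⟫| * ‖g‖ ≤ (‖g‖ * ‖a‖) * ‖g‖ :=
        mul_le_mul_of_nonneg_right (abs_real_inner_le_norm _ _) (norm_nonneg _)
    _ = ‖a‖ * ‖g‖ ^ 2 := by ring

open scoped RealInnerProductSpace in
lemma es_integral_inner_smul (a : EuclideanSpace ℝ (Fin d)) :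
    ∫ g : EuclideanSpace ℝ (Fin d), ⟪g, a⟫ • g ∂(stdGaussian d) = a := by
  refine ext_inner_left ℝ fun b => ?_
  rw [← integral_inner (es_integrable_inner_smul a)]
  have hexp : ∀ g : EuclideanSpace ℝ (Fin d), ⟪b, ⟪g, a⟫ • g⟫
      = ∑ i, ∑ j, (a i * b j) * (g i * g j) := by
    intro g
    rw [real_inner_smul_right, es_inner_eq g a, es_inner_eq b g]
    rw [Finset.sum_mul_sum]
    refine Finset.sum_congr rfl fun i _ => ?_
    refine Finset.sum_congr rfl fun j _ => ?_
    ring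
  have hint2 : ∀ i j : Fin d, Integrable
      (fun g : EuclideanSpace ℝ (Fin d) => (a i * b j) * (g i * g j)) (stdGaussian d) :=
    fun i j => (es_integrable_pair i j).const_mul _
  have hint1 : ∀ i : Fin d, Integrable
      (fun g : EuclideanSpace ℝ (Fin d) => ∑ j, (a i * b j) * (g i * g j)) (stdGaussian d) :=
    fun i => integrable_finset_sum _ fun j _ => hint2 i j
  calc ∫ g : EuclideanSpace ℝ (Fin d), ⟪b, ⟪g, a⟫ • g⟫ ∂(stdGaussian d)
      = ∫ g : EuclideanSpace ℝ (Fin d), ∑ i, ∑ j, (a i * b j) * (g i * g j) ∂(stdGaussian d) :=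
        integral_congr_ae (Filter.Eventually.of_forall hexp)
    _ = ∑ i, ∑ j, (a i * b j) * (if i = j then (1:ℝ) else 0) := by
        rw [integral_finset_sum _ fun i _ => hint1 i]
        refine Finset.sum_congr rfl fun i _ => ?_
        rw [integral_finset_sum _ fun j _ => hint2 i j]
        refine Finset.sum_congr rfl fun j _ => ?_
        rw [integral_const_mul, es_integral_pair]
    _ = ⟪b, a⟫ := by
        have hj : ∀ i : Fin d, (∑ j, (a i * b j) * (if i = j then (1:ℝ) else 0))
            = a i * b i := by
          intro i
          have : ∀ j : Fin d, (a i * b j) * (if i = j then (1:ℝ) else 0)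
              = if i = j then a i * b j else 0 := by
            intro j; split <;> simp
          simp_rw [this]
          rw [Finset.sum_ite_eq, if_pos (Finset.mem_univ i)]
        simp_rw [hj]
        rw [es_inner_eq]
        refine Finset.sum_congr rfl fun i _ => ?_
        ring

end ESAux

/-! ### Main abstract variance bound -/

open scoped RealInnerProductSpace in
theorem es_main {d : ℕ} (hd : 1 ≤ d) (L τ σ : ℝ) (hL : 0 < L) (hτ : 0 < τ) (hσ : 0 < σ)
    (v : EuclideanSpace ℝ (Fin d) → ℝ) (a : EuclideanSpace ℝ (Fin d))
    (hv_cont : Continuous v) (ha_le : ‖a‖ ≤ L)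
    (hv_le : ∀ g, |v g| ≤ L * ‖g‖)
    (he : ∀ g, |v g - ⟪g, a⟫| ≤ τ * σ ^ 2 * ‖g‖ ^ 3) :
    |((∫ g, ‖v g • g‖ ^ 2 ∂(stdGaussian d)) - ‖∫ g, v g • g ∂(stdGaussian d)‖ ^ 2)
        - ((d : ℝ) + 1) * ‖a‖ ^ 2|
      ≤ 210 * τ ^ 2 * σ ^ 4 * (d : ℝ) ^ 4 + 6 * τ * σ ^ 2 * L * (d : ℝ) ^ 2
        + 30 * τ * σ ^ 2 * L * (d : ℝ) ^ 3 := by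
  have hinner_le : ∀ g : EuclideanSpace ℝ (Fin d), |⟪g, a⟫| ≤ L * ‖g‖ := by
    intro g
    calc |⟪g, a⟫| ≤ ‖g‖ * ‖a‖ := abs_real_inner_le_norm g a
      _ ≤ ‖g‖ * L := mul_le_mul_of_nonneg_left ha_le (norm_nonneg g)
      _ = L * ‖g‖ := mul_comm _ _
  -- integrability of norm powers
  have hnorm4_int : Integrable (fun g : EuclideanSpace ℝ (Fin d) => ‖g‖ ^ 4) (stdGaussian d) := by
    have := es_norm_pow_integrable hd 1; norm_num at this; exact this
  have hnorm6_int : Integrable (fun g : EuclideanSpace ℝ (Fin d) => ‖g‖ ^ 6) (stdGaussian d) := by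
    have := es_norm_pow_integrable hd 2; norm_num at this; exact this
  have hnorm4_le : (∫ g : EuclideanSpace ℝ (Fin d), ‖g‖ ^ 4 ∂(stdGaussian d))
      ≤ 3 * (d:ℝ) ^ 2 := by
    have := es_norm_pow_integral_le hd 1
    norm_num [gm_four] at this
    linarith
  have hnorm6_le : (∫ g : EuclideanSpace ℝ (Fin d), ‖g‖ ^ 6 ∂(stdGaussian d))
      ≤ 15 * (d:ℝ) ^ 3 := by
    have := es_norm_pow_integral_le hd 2
    norm_num [gm_six] at this
    linarith
  -- decomposition of the second moment
  have hexp2 : ∀ g : EuclideanSpace ℝ (Fin d), ‖v g • g‖ ^ 2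
      = ⟪g, a⟫ ^ 2 * ‖g‖ ^ 2 + (v g - ⟪g, a⟫) * (v g + ⟪g, a⟫) * ‖g‖ ^ 2 := by
    intro g
    rw [norm_smul, mul_pow, Real.norm_eq_abs, sq_abs]
    ring
  have hh_bound : ∀ g : EuclideanSpace ℝ (Fin d),
      |(v g - ⟪g, a⟫) * (v g + ⟪g, a⟫) * ‖g‖ ^ 2| ≤ 2 * τ * σ ^ 2 * L * ‖g‖ ^ 6 := by
    intro g
    rw [abs_mul, abs_mul]
    have h2 : |v g + ⟪g, a⟫| ≤ 2 * L * ‖g‖ := by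
      calc |v g + ⟪g, a⟫| ≤ |v g| + |⟪g, a⟫| := abs_add_le _ _
        _ ≤ L * ‖g‖ + L * ‖g‖ := add_le_add (hv_le g) (hinner_le g)
        _ = 2 * L * ‖g‖ := by ring
    rw [abs_of_nonneg (by positivity : (0:ℝ) ≤ ‖g‖ ^ 2)]
    calc |v g - ⟪g, a⟫| * |v g + ⟪g, a⟫| * ‖g‖ ^ 2
        ≤ (τ * σ ^ 2 * ‖g‖ ^ 3) * (2 * L * ‖g‖) * ‖g‖ ^ 2 := by
          apply mul_le_mul_of_nonneg_right _ (by positivity)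
          exact mul_le_mul (he g) h2 (abs_nonneg _) (by positivity)
      _ = 2 * τ * σ ^ 2 * L * ‖g‖ ^ 6 := by ring
  have hh_meas : AEStronglyMeasurable
      (fun g : EuclideanSpace ℝ (Fin d) => (v g - ⟪g, a⟫) * (v g + ⟪g, a⟫) * ‖g‖ ^ 2)
      (stdGaussian d) := by
    have hic : Continuous (fun g : EuclideanSpace ℝ (Fin d) => ⟪g, a⟫) :=
      continuous_id.inner continuous_const
    exact (((hv_cont.sub hic).mul (hv_cont.add hic)).mul (continuous_norm.pow 2)).aestronglyMeasurable
  have hh_int : Integrable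
      (fun g : EuclideanSpace ℝ (Fin d) => (v g - ⟪g, a⟫) * (v g + ⟪g, a⟫) * ‖g‖ ^ 2)
      (stdGaussian d) := by
    refine Integrable.mono' (hnorm6_int.const_mul (2 * τ * σ ^ 2 * L)) hh_meas
      (Filter.Eventually.of_forall fun g => ?_)
    rw [Real.norm_eq_abs]
    exact hh_bound g
  have hquad_int : Integrable
      (fun g : EuclideanSpace ℝ (Fin d) => ⟪g, a⟫ ^ 2 * ‖g‖ ^ 2) (stdGaussian d) := by
    refine Integrable.mono' (hnorm4_int.const_mul (L ^ 2))
      (((continuous_id.inner continuous_const).pow 2).mul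
        (continuous_norm.pow 2) |>.aestronglyMeasurable)
      (Filter.Eventually.of_forall fun g => ?_)
    rw [Real.norm_eq_abs, abs_of_nonneg (by positivity)]
    have h1 : ⟪g, a⟫ ^ 2 ≤ (L * ‖g‖) ^ 2 := by
      rw [← sq_abs ⟪g, a⟫]
      exact pow_le_pow_left₀ (abs_nonneg _) (hinner_le g) 2
    calc ⟪g, a⟫ ^ 2 * ‖g‖ ^ 2 ≤ (L * ‖g‖) ^ 2 * ‖g‖ ^ 2 :=
          mul_le_mul_of_nonneg_right h1 (by positivity)
      _ = L ^ 2 * ‖g‖ ^ 4 := by ring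
  have hm2_eq : (∫ g, ‖v g • g‖ ^ 2 ∂(stdGaussian d))
      = ((d:ℝ) + 2) * ‖a‖ ^ 2
        + ∫ g, (v g - ⟪g, a⟫) * (v g + ⟪g, a⟫) * ‖g‖ ^ 2 ∂(stdGaussian d) := by
    calc (∫ g, ‖v g • g‖ ^ 2 ∂(stdGaussian d))
        = ∫ g, (⟪g, a⟫ ^ 2 * ‖g‖ ^ 2
            + (v g - ⟪g, a⟫) * (v g + ⟪g, a⟫) * ‖g‖ ^ 2) ∂(stdGaussian d) :=
          integral_congr_ae (Filter.Eventually.of_forall hexp2)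
      _ = (∫ g, ⟪g, a⟫ ^ 2 * ‖g‖ ^ 2 ∂(stdGaussian d))
            + ∫ g, (v g - ⟪g, a⟫) * (v g + ⟪g, a⟫) * ‖g‖ ^ 2 ∂(stdGaussian d) :=
          integral_add hquad_int hh_int
      _ = ((d:ℝ) + 2) * ‖a‖ ^ 2
            + ∫ g, (v g - ⟪g, a⟫) * (v g + ⟪g, a⟫) * ‖g‖ ^ 2 ∂(stdGaussian d) := by
          rw [es_integral_inner_sq]
  have hH_abs : |∫ g, (v g - ⟪g, a⟫) * (v g + ⟪g, a⟫) * ‖g‖ ^ 2 ∂(stdGaussian d)|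
      ≤ 30 * τ * σ ^ 2 * L * (d:ℝ) ^ 3 := by
    calc |∫ g, (v g - ⟪g, a⟫) * (v g + ⟪g, a⟫) * ‖g‖ ^ 2 ∂(stdGaussian d)|
        ≤ ∫ g, |(v g - ⟪g, a⟫) * (v g + ⟪g, a⟫) * ‖g‖ ^ 2| ∂(stdGaussian d) := by
          simpa only [Real.norm_eq_abs] using norm_integral_le_integral_norm
            (μ := stdGaussian d) (fun g => (v g - ⟪g, a⟫) * (v g + ⟪g, a⟫) * ‖g‖ ^ 2)
      _ ≤ ∫ g, 2 * τ * σ ^ 2 * L * ‖g‖ ^ 6 ∂(stdGaussian d) :=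
          integral_mono hh_int.abs (hnorm6_int.const_mul _) hh_bound
      _ = 2 * τ * σ ^ 2 * L * ∫ g, ‖g‖ ^ 6 ∂(stdGaussian d) := integral_const_mul _ _
      _ ≤ 2 * τ * σ ^ 2 * L * (15 * (d:ℝ) ^ 3) :=
          mul_le_mul_of_nonneg_left hnorm6_le (by positivity)
      _ = 30 * τ * σ ^ 2 * L * (d:ℝ) ^ 3 := by ring
  -- the mean
  have hmean_int : Integrable (fun g : EuclideanSpace ℝ (Fin d) => v g • g) (stdGaussian d) := by
    refine Integrable.mono' (es_integrable_norm_sq.const_mul L)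
      ((hv_cont.smul continuous_id).aestronglyMeasurable)
      (Filter.Eventually.of_forall fun g => ?_)
    rw [norm_smul, Real.norm_eq_abs]
    calc |v g| * ‖g‖ ≤ (L * ‖g‖) * ‖g‖ := mul_le_mul_of_nonneg_right (hv_le g) (norm_nonneg _)
      _ = L * ‖g‖ ^ 2 := by ring
  have hdiff_int : Integrable
      (fun g : EuclideanSpace ℝ (Fin d) => v g • g - ⟪g, a⟫ • g) (stdGaussian d) :=
    hmean_int.sub (es_integrable_inner_smul a)
  have hr_eq : (∫ g, v g • g ∂(stdGaussian d)) - a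
      = ∫ g, (v g • g - ⟪g, a⟫ • g) ∂(stdGaussian d) := by
    rw [integral_sub hmean_int (es_integrable_inner_smul a), es_integral_inner_smul a]
  have hr_le : ‖(∫ g, v g • g ∂(stdGaussian d)) - a‖ ≤ 3 * τ * σ ^ 2 * (d:ℝ) ^ 2 := by
    rw [hr_eq]
    calc ‖∫ g, (v g • g - ⟪g, a⟫ • g) ∂(stdGaussian d)‖
        ≤ ∫ g, ‖v g • g - ⟪g, a⟫ • g‖ ∂(stdGaussian d) := norm_integral_le_integral_norm _
      _ ≤ ∫ g, τ * σ ^ 2 * ‖g‖ ^ 4 ∂(stdGaussian d) := by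
          refine integral_mono hdiff_int.norm (hnorm4_int.const_mul _)
            (fun g => ?_)
          rw [← sub_smul, norm_smul, Real.norm_eq_abs]
          calc |v g - ⟪g, a⟫| * ‖g‖ ≤ (τ * σ ^ 2 * ‖g‖ ^ 3) * ‖g‖ :=
                mul_le_mul_of_nonneg_right (he g) (norm_nonneg _)
            _ = τ * σ ^ 2 * ‖g‖ ^ 4 := by ring
      _ = τ * σ ^ 2 * ∫ g, ‖g‖ ^ 4 ∂(stdGaussian d) := integral_const_mul _ _
      _ ≤ τ * σ ^ 2 * (3 * (d:ℝ) ^ 2) := mul_le_mul_of_nonneg_left hnorm4_le (by positivity)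
      _ = 3 * τ * σ ^ 2 * (d:ℝ) ^ 2 := by ring
  -- assemble
  set r : EuclideanSpace ℝ (Fin d) := (∫ g, v g • g ∂(stdGaussian d)) - a with hrdef
  have hI2 : (∫ g, v g • g ∂(stdGaussian d)) = a + r := by rw [hrdef]; abel
  have hnormI2 : ‖∫ g, v g • g ∂(stdGaussian d)‖ ^ 2
      = ‖a‖ ^ 2 + 2 * ⟪a, r⟫ + ‖r‖ ^ 2 := by
    rw [hI2, norm_add_sq_real]
  rw [hm2_eq, hnormI2]
  have hsimp : ((d:ℝ) + 2) * ‖a‖ ^ 2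
        + (∫ g, (v g - ⟪g, a⟫) * (v g + ⟪g, a⟫) * ‖g‖ ^ 2 ∂(stdGaussian d))
        - (‖a‖ ^ 2 + 2 * ⟪a, r⟫ + ‖r‖ ^ 2) - ((d:ℝ) + 1) * ‖a‖ ^ 2
      = (∫ g, (v g - ⟪g, a⟫) * (v g + ⟪g, a⟫) * ‖g‖ ^ 2 ∂(stdGaussian d))
        - 2 * ⟪a, r⟫ - ‖r‖ ^ 2 := by ring
  rw [hsimp]
  have har : |2 * ⟪a, r⟫| ≤ 2 * (L * (3 * τ * σ ^ 2 * (d:ℝ) ^ 2)) := by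
    rw [abs_mul, abs_two]
    apply mul_le_mul_of_nonneg_left _ (by norm_num)
    calc |⟪a, r⟫| ≤ ‖a‖ * ‖r‖ := abs_real_inner_le_norm a r
      _ ≤ L * (3 * τ * σ ^ 2 * (d:ℝ) ^ 2) :=
          mul_le_mul ha_le hr_le (norm_nonneg r) hL.le
  have hr2 : ‖r‖ ^ 2 ≤ (3 * τ * σ ^ 2 * (d:ℝ) ^ 2) ^ 2 :=
    pow_le_pow_left₀ (norm_nonneg r) hr_le 2
  have hq : (0:ℝ) ≤ τ ^ 2 * σ ^ 4 * (d:ℝ) ^ 4 := by positivity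
  calc |(∫ g, (v g - ⟪g, a⟫) * (v g + ⟪g, a⟫) * ‖g‖ ^ 2 ∂(stdGaussian d))
        - 2 * ⟪a, r⟫ - ‖r‖ ^ 2|
      ≤ |(∫ g, (v g - ⟪g, a⟫) * (v g + ⟪g, a⟫) * ‖g‖ ^ 2 ∂(stdGaussian d)) - 2 * ⟪a, r⟫|
        + |‖r‖ ^ 2| := abs_sub _ _
    _ ≤ (|∫ g, (v g - ⟪g, a⟫) * (v g + ⟪g, a⟫) * ‖g‖ ^ 2 ∂(stdGaussian d)| + |2 * ⟪a, r⟫|)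
        + |‖r‖ ^ 2| := add_le_add_left (abs_sub _ _) _
    _ ≤ (30 * τ * σ ^ 2 * L * (d:ℝ) ^ 3 + 2 * (L * (3 * τ * σ ^ 2 * (d:ℝ) ^ 2)))
        + (3 * τ * σ ^ 2 * (d:ℝ) ^ 2) ^ 2 := by
        apply add_le_add (add_le_add hH_abs har)
        rw [abs_of_nonneg (by positivity : (0:ℝ) ≤ ‖r‖ ^ 2)]
        exact hr2
    _ ≤ 210 * τ ^ 2 * σ ^ 4 * (d : ℝ) ^ 4 + 6 * τ * σ ^ 2 * L * (d : ℝ) ^ 2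
        + 30 * τ * σ ^ 2 * L * (d : ℝ) ^ 3 := by nlinarith [hq]

end ESAux

/-- Variance bound for the isotropic ES estimator, explicit constants. -/
theorem variance_bound_isotropic_ES
    (d : ℕ) (hd : 1 ≤ d) (L τ σ : ℝ) (hL : 0 < L) (hτ : 0 < τ) (hσ : 0 < σ)
    (F : EuclideanSpace ℝ (Fin d) → ℝ)
    (hdiff : Differentiable ℝ F)
    (hlip : ∀ x y : EuclideanSpace ℝ (Fin d), |F x - F y| ≤ L * ‖x - y‖)
    (happrox : ∀ x g : EuclideanSpace ℝ (Fin d),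
      |(F (x + σ • g) - F (x - σ • g)) / (2 * σ) - ⟪g, gradient F x⟫| ≤ τ * σ ^ 2 * ‖g‖ ^ 3)
    (θ : EuclideanSpace ℝ (Fin d))
    :
    |((∫ g, ‖((F (θ + σ • g) - F (θ - σ • g)) / (2 * σ)) • g‖ ^ 2 ∂(stdGaussian d)) - ‖(∫ g, ((F (θ + σ • g) - F (θ - σ • g)) / (2 * σ)) • g ∂(stdGaussian d))‖ ^ 2) - ((d : ℝ) + 1) * ‖gradient F θ‖ ^ 2|
      ≤ 210 * τ ^ 2 * σ ^ 4 * (d : ℝ) ^ 4 + 6 * τ * σ ^ 2 * L * (d : ℝ) ^ 2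
        + 30 * τ * σ ^ 2 * L * (d : ℝ) ^ 3 := by
  have hσ2 : (0:ℝ) < 2 * σ := by positivity
  have hF_cont : Continuous F := hdiff.continuous
  have hv_cont : Continuous
      (fun g : EuclideanSpace ℝ (Fin d) => (F (θ + σ • g) - F (θ - σ • g)) / (2 * σ)) := by
    apply Continuous.div_const
    have h1 : Continuous (fun g : EuclideanSpace ℝ (Fin d) => θ + σ • g) :=
      continuous_const.add (continuous_id.const_smul σ)
    have h2 : Continuous (fun g : EuclideanSpace ℝ (Fin d) => θ - σ • g) :=
      continuous_const.sub (continuous_id.const_smul σ)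
    exact (hF_cont.comp h1).sub (hF_cont.comp h2)
  have ha_le : ‖gradient F θ‖ ≤ L := by
    have hlw : LipschitzWith (Real.toNNReal L) F := by
      apply LipschitzWith.of_dist_le_mul
      intro x y
      rw [Real.dist_eq, dist_eq_norm]
      calc |F x - F y| ≤ L * ‖x - y‖ := hlip x y
        _ = (Real.toNNReal L : ℝ) * ‖x - y‖ := by rw [Real.coe_toNNReal _ hL.le]
    have h1 : ‖fderiv ℝ F θ‖ ≤ L := by
      have := norm_fderiv_le_of_lipschitz ℝ hlw (x₀ := θ)
      rwa [Real.coe_toNNReal _ hL.le] at this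
    calc ‖gradient F θ‖ = ‖fderiv ℝ F θ‖ := by
          rw [gradient]; exact LinearIsometryEquiv.norm_map _ _
      _ ≤ L := h1
  have hv_le : ∀ g : EuclideanSpace ℝ (Fin d),
      |(F (θ + σ • g) - F (θ - σ • g)) / (2 * σ)| ≤ L * ‖g‖ := by
    intro g
    rw [abs_div, abs_of_pos hσ2, div_le_iff₀ hσ2]
    have heq : (θ + σ • g) - (θ - σ • g) = (2 * σ) • g := by
      rw [two_mul, add_smul]; abel
    calc |F (θ + σ • g) - F (θ - σ • g)| ≤ L * ‖(θ + σ • g) - (θ - σ • g)‖ := hlip _ _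
      _ = L * ‖g‖ * (2 * σ) := by
          rw [heq, norm_smul, Real.norm_eq_abs, abs_of_pos hσ2]; ring
  exact es_main hd L τ σ hL hτ hσ
    (fun g => (F (θ + σ • g) - F (θ - σ • g)) / (2 * σ)) (gradient F θ)
    hv_cont ha_le hv_le (happrox θ)
end

section
/- (Second moment of the isotropic ES estimator.) The one-sample antithetic ES gradient estimator satisfies |E_{g~N(0,I_d)}[‖z_ES(g)‖²] − (d+2)·‖∇F(θ)‖²| ≤ 30·τ·σ²·L·d³ + 105·τ²·σ⁴·d⁴. -/
open MeasureTheory ProbabilityTheory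
open scoped RealInnerProductSpace

namespace ESaux

open Real
open scoped ENNReal NNReal

variable {d : ℕ}




/-- integrability of `x^k * exp (-x^2/2)` -/
lemma integrable_pow_mul_exp (k : ℕ) :
    Integrable (fun x : ℝ => x ^ k * Real.exp (-x ^ 2 / 2)) := by
  have hb : Integrable (fun x : ℝ => Real.exp (-(1/2 : ℝ) * x ^ 2)
      + (4 ^ k * (k.factorial : ℝ)) * Real.exp (-(1/4 : ℝ) * x ^ 2)) :=
    (integrable_exp_neg_mul_sq (by norm_num)).add
      ((integrable_exp_neg_mul_sq (by norm_num)).const_mul _)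
  refine hb.mono' ?_ ?_
  · exact (by fun_prop : Continuous (fun x : ℝ => x ^ k * Real.exp (-x ^ 2 / 2))).aestronglyMeasurable
  · filter_upwards with x
    have hkey : (x ^ 2) ^ k * Real.exp (-x ^ 2 / 2)
        ≤ 4 ^ k * (k.factorial : ℝ) * Real.exp (-(1/4 : ℝ) * x ^ 2) := by
      have h1 : (x ^ 2 / 4) ^ k / (k.factorial : ℝ) ≤ Real.exp (x ^ 2 / 4) := by
        have := Real.sum_le_exp_of_nonneg (x := x ^ 2 / 4) (by positivity) (k + 1)
        refine le_trans ?_ this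
        exact Finset.single_le_sum (f := fun i => (x ^ 2 / 4) ^ i / (i.factorial : ℝ))
          (fun i _ => by positivity) (Finset.self_mem_range_succ k)
      have h2 : (x ^ 2) ^ k ≤ 4 ^ k * (k.factorial : ℝ) * Real.exp (x ^ 2 / 4) := by
        have hfac : (0:ℝ) < (k.factorial : ℝ) := by positivity
        have := (div_le_iff₀ hfac).mp h1
        calc (x ^ 2) ^ k = 4 ^ k * (x ^ 2 / 4) ^ k := by
              rw [div_pow, ← mul_div_assoc, mul_comm, mul_div_assoc, div_self (by positivity),
                mul_one]
          _ ≤ 4 ^ k * (Real.exp (x ^ 2 / 4) * (k.factorial : ℝ)) := by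
              gcongr
          _ = 4 ^ k * (k.factorial : ℝ) * Real.exp (x ^ 2 / 4) := by ring
      calc (x ^ 2) ^ k * Real.exp (-x ^ 2 / 2)
          ≤ (4 ^ k * (k.factorial : ℝ) * Real.exp (x ^ 2 / 4)) * Real.exp (-x ^ 2 / 2) :=
            mul_le_mul_of_nonneg_right h2 (Real.exp_pos _).le
        _ = 4 ^ k * (k.factorial : ℝ) * Real.exp (-(1/4 : ℝ) * x ^ 2) := by
            rw [mul_assoc, ← Real.exp_add]
            ring_nf
    have hx : ‖x ^ k * Real.exp (-x ^ 2 / 2)‖ = |x| ^ k * Real.exp (-x ^ 2 / 2) := by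
      rw [norm_mul, Real.norm_eq_abs, Real.norm_eq_abs, abs_pow,
        abs_of_pos (Real.exp_pos _)]
    rw [hx]
    rcases le_total (|x|) 1 with h | h
    · have : |x| ^ k ≤ 1 := pow_le_one₀ (abs_nonneg x) h
      have h2 : |x| ^ k * Real.exp (-x ^ 2 / 2) ≤ Real.exp (-(1/2 : ℝ) * x ^ 2) := by
        have : |x| ^ k * Real.exp (-x ^ 2 / 2) ≤ 1 * Real.exp (-x ^ 2 / 2) := by
          gcongr
        simpa [neg_div, neg_mul, div_eq_mul_inv, mul_comm] using this
      have h3 : (0:ℝ) ≤ (4 ^ k * (k.factorial : ℝ)) * Real.exp (-(1/4 : ℝ) * x ^ 2) := by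
        positivity
      linarith
    · have h1 : |x| ^ k ≤ (x ^ 2) ^ k := by
        have heq : (x ^ 2) ^ k = |x| ^ (2 * k) := by rw [← sq_abs, ← pow_mul]
        rw [heq]
        exact pow_le_pow_right₀ h (by omega)
      have h2 : |x| ^ k * Real.exp (-x ^ 2 / 2) ≤ (x ^ 2) ^ k * Real.exp (-x ^ 2 / 2) :=
        mul_le_mul_of_nonneg_right h1 (Real.exp_pos _).le
      have h3 : (0:ℝ) ≤ Real.exp (-(1/2 : ℝ) * x ^ 2) := (Real.exp_pos _).le
      linarith




/-- the unnormalized moments -/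
noncomputable def J (k : ℕ) : ℝ := ∫ x : ℝ, x ^ k * Real.exp (-x ^ 2 / 2)

lemma J_zero : J 0 = Real.sqrt (2 * π) := by
  have h := integral_gaussian (1/2 : ℝ)
  simp only [J, pow_zero, one_mul]
  have : (fun x : ℝ => Real.exp (-x ^ 2 / 2)) = fun x : ℝ => Real.exp (-(1/2 : ℝ) * x ^ 2) := by
    funext x; ring_nf
  rw [this, h]
  rw [div_div_eq_mul_div, div_one] -- π / (1/2) = π * 2 ?
  ring_nf

lemma neg_sq_half_deriv (x : ℝ) :
    HasDerivAt (fun y : ℝ => -y ^ 2 / 2) (-x) x := by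
  have := (hasDerivAt_pow 2 x).neg.div_const 2
  exact this.congr_deriv (by norm_num; ring)

lemma exp_deriv_aux (m : ℕ) (x : ℝ) :
    HasDerivAt (fun y : ℝ => y ^ (m+1) * Real.exp (-y ^ 2 / 2))
      (((m:ℝ)+1) * (x ^ m * Real.exp (-x ^ 2 / 2)) - x ^ (m+2) * Real.exp (-x ^ 2 / 2)) x := by
  have h1 : HasDerivAt (fun y : ℝ => y ^ (m+1)) (((m:ℝ)+1) * x ^ m) x := by
    simpa using hasDerivAt_pow (m+1) x
  have h2 : HasDerivAt (fun y : ℝ => Real.exp (-y ^ 2 / 2)) (-x * Real.exp (-x ^ 2 / 2)) x := by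
    simpa [mul_comm] using (neg_sq_half_deriv x).exp
  have := h1.mul h2
  exact this.congr_deriv (by ring)

lemma J_succ_succ (m : ℕ) : J (m + 2) = ((m:ℝ)+1) * J m := by
  have hint : Integrable (fun x : ℝ =>
      ((m:ℝ)+1) * (x ^ m * Real.exp (-x ^ 2 / 2)) - x ^ (m+2) * Real.exp (-x ^ 2 / 2)) :=
    ((integrable_pow_mul_exp m).const_mul ((m:ℝ)+1)).sub (integrable_pow_mul_exp (m+2))
  have h0 := integral_eq_zero_of_hasDerivAt_of_integrable (fun x => exp_deriv_aux m x) hint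
    (integrable_pow_mul_exp (m+1))
  rw [integral_sub ((integrable_pow_mul_exp m).const_mul _) (integrable_pow_mul_exp (m+2)),
    integral_const_mul] at h0
  have h1 : J (m+2) = ∫ x : ℝ, x ^ (m+2) * Real.exp (-x ^ 2 / 2) := rfl
  have h2 : J m = ∫ x : ℝ, x ^ m * Real.exp (-x ^ 2 / 2) := rfl
  rw [h1, h2]
  linarith

lemma J_one : J 1 = 0 := by
  have hder : ∀ x : ℝ, HasDerivAt (fun y : ℝ => -Real.exp (-y ^ 2 / 2))
      (x ^ 1 * Real.exp (-x ^ 2 / 2)) x := by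
    intro x
    have := (neg_sq_half_deriv x).exp.neg
    exact this.congr_deriv (by ring)
  have h0 := integral_eq_zero_of_hasDerivAt_of_integrable hder (integrable_pow_mul_exp 1)
    ((integrable_pow_mul_exp 0).neg.congr (by filter_upwards with x; simp))
  simpa [J] using h0

/-- k-th moment of the standard gaussian -/
noncomputable def gm (k : ℕ) : ℝ := ∫ x : ℝ, x ^ k ∂(gaussianReal 0 1)

lemma gaussianPDFReal_std (x : ℝ) :
    gaussianPDFReal 0 1 x = (Real.sqrt (2 * π))⁻¹ * Real.exp (-x ^ 2 / 2) := by
  simp [gaussianPDFReal]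

lemma integral_gaussianReal_std (f : ℝ → ℝ) :
    ∫ x, f x ∂(gaussianReal 0 1) = ∫ x, gaussianPDFReal 0 1 x * f x := by
  rw [gaussianReal_of_var_ne_zero 0 one_ne_zero]
  have hmeas : Measurable fun x => (gaussianPDFReal 0 1 x).toNNReal :=
    (measurable_gaussianPDFReal 0 1).real_toNNReal
  have : (gaussianPDF 0 1) = fun x => ((gaussianPDFReal 0 1 x).toNNReal : ℝ≥0∞) := by
    funext x; simp [gaussianPDF, ENNReal.ofReal]
  rw [this, integral_withDensity_eq_integral_smul hmeas]
  congr 1; funext x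
  simp [NNReal.smul_def, Real.coe_toNNReal _ (gaussianPDFReal_nonneg 0 1 x)]

lemma integrable_gaussianReal_iff (f : ℝ → ℝ) :
    Integrable f (gaussianReal 0 1) ↔ Integrable (fun x => gaussianPDFReal 0 1 x * f x) := by
  rw [gaussianReal_of_var_ne_zero 0 one_ne_zero]
  have hmeas : Measurable fun x => (gaussianPDFReal 0 1 x).toNNReal :=
    (measurable_gaussianPDFReal 0 1).real_toNNReal
  have : (gaussianPDF 0 1) = fun x => ((gaussianPDFReal 0 1 x).toNNReal : ℝ≥0∞) := by
    funext x; simp [gaussianPDF, ENNReal.ofReal]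
  rw [this, integrable_withDensity_iff_integrable_coe_smul hmeas]
  constructor <;> intro h <;> refine h.congr ?_ <;> filter_upwards with x <;>
    simp [NNReal.smul_def, Real.coe_toNNReal _ (gaussianPDFReal_nonneg 0 1 x)]

lemma integrable_pow_gaussian (k : ℕ) : Integrable (fun x : ℝ => x ^ k) (gaussianReal 0 1) := by
  rw [integrable_gaussianReal_iff]
  refine ((integrable_pow_mul_exp k).const_mul ((Real.sqrt (2*π))⁻¹)).congr ?_
  filter_upwards with x
  rw [gaussianPDFReal_std]
  ring

lemma gm_eq (k : ℕ) : gm k = (Real.sqrt (2 * π))⁻¹ * J k := by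
  rw [gm, integral_gaussianReal_std, J, ← integral_const_mul]
  congr 1; funext x
  rw [gaussianPDFReal_std]
  ring

lemma sqrt_two_pi_pos : (0:ℝ) < Real.sqrt (2 * π) := Real.sqrt_pos.mpr (by positivity)

lemma gm_zero : gm 0 = 1 := by
  rw [gm_eq, J_zero, inv_mul_cancel₀ (ne_of_gt sqrt_two_pi_pos)]

lemma gm_one : gm 1 = 0 := by rw [gm_eq, J_one, mul_zero]

lemma gm_succ_succ (m : ℕ) : gm (m+2) = ((m:ℝ)+1) * gm m := by
  rw [gm_eq, gm_eq, J_succ_succ]; ring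

lemma gm_two : gm 2 = 1 := by rw [show 2 = 0+2 from rfl, gm_succ_succ, gm_zero]; norm_num
lemma gm_three : gm 3 = 0 := by rw [show 3 = 1+2 from rfl, gm_succ_succ, gm_one]; ring
lemma gm_four : gm 4 = 3 := by rw [show 4 = 2+2 from rfl, gm_succ_succ, gm_two]; norm_num
lemma gm_six : gm 6 = 15 := by rw [show 6 = 4+2 from rfl, gm_succ_succ, gm_four]; norm_num







instance stdGaussian_isProb (n : ℕ) : IsProbabilityMeasure (stdGaussian n) :=
  ⟨by rw [_root_.stdGaussian, Measure.map_apply (MeasurableEquiv.measurable _) MeasurableSet.univ, Set.preimage_univ]; exact measure_univ⟩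

lemma integrable_prod_eval (f : Fin d → ℝ → ℝ)
    (hf : ∀ i, Integrable (f i) (gaussianReal 0 1)) :
    Integrable (fun g : EuclideanSpace ℝ (Fin d) => ∏ i, f i (g i)) (stdGaussian d) := by
  letI : MeasureSpace ℝ := ⟨gaussianReal 0 1⟩
  haveI : SigmaFinite (volume : Measure ℝ) := inferInstanceAs (SigmaFinite (gaussianReal 0 1))
  rw [_root_.stdGaussian, integrable_map_equiv (MeasurableEquiv.toLp 2 (Fin d → ℝ))]
  exact MeasureTheory.Integrable.fintype_prod (f := f) hf

lemma integral_prod_eval (f : Fin d → ℝ → ℝ) :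
    ∫ g, ∏ i, f i (g i) ∂(stdGaussian d) = ∏ i, ∫ x, f i x ∂(gaussianReal 0 1) := by
  letI : MeasureSpace ℝ := ⟨gaussianReal 0 1⟩
  haveI : SigmaFinite (volume : Measure ℝ) := inferInstanceAs (SigmaFinite (gaussianReal 0 1))
  rw [_root_.stdGaussian, integral_map_equiv]
  exact MeasureTheory.integral_fintype_prod_eq_prod (fun i => f i)






lemma integrable_monomial (m : Fin d → ℕ) :
    Integrable (fun g : EuclideanSpace ℝ (Fin d) => ∏ i, (g i) ^ (m i)) (stdGaussian d) :=
  integrable_prod_eval (fun i x => x ^ (m i)) (fun i => integrable_pow_gaussian (m i))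

lemma integral_monomial (m : Fin d → ℕ) :
    ∫ g, ∏ i, (g i) ^ (m i) ∂(stdGaussian d) = ∏ i, gm (m i) :=
  integral_prod_eval (fun i x => x ^ (m i))

lemma single_pow (x : Fin d → ℝ) (i : Fin d) (k : ℕ) :
    (x i) ^ k = ∏ l, (x l) ^ (if l = i then k else 0) := by
  simp [apply_ite (x · ^ ·), Finset.prod_ite_eq']

lemma integrable_pow_eval (i : Fin d) (k : ℕ) :
    Integrable (fun g : EuclideanSpace ℝ (Fin d) => (g i) ^ k) (stdGaussian d) := by
  have := integrable_monomial (fun l => if l = i then k else 0)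
  refine this.congr ?_
  filter_upwards with g
  exact (single_pow g i k).symm

lemma integral_pow_eval (i : Fin d) (k : ℕ) :
    ∫ g, (g i) ^ k ∂(stdGaussian d) = gm k := by
  have h : (fun g : EuclideanSpace ℝ (Fin d) => (g i) ^ k)
      = fun g => ∏ l, (g l) ^ (if l = i then k else 0) := by
    funext g; exact single_pow g i k
  rw [h, integral_monomial]
  simp [apply_ite gm, gm_zero, Finset.prod_ite_eq']


def m3 (i j k : Fin d) : Fin d → ℕ :=
  fun l => (if l = i then 1 else 0) + ((if l = j then 1 else 0) + (if l = k then 2 else 0))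

lemma mono3_eq (x : Fin d → ℝ) (i j k : Fin d) :
    x i * x j * (x k) ^ 2 = ∏ l, (x l) ^ (m3 i j k l) := by
  simp only [m3, pow_add, Finset.prod_mul_distrib]
  rw [← single_pow x i 1, ← single_pow x j 1, ← single_pow x k 2]
  ring

lemma integrable_mono3 (i j k : Fin d) :
    Integrable (fun g : EuclideanSpace ℝ (Fin d) => g i * g j * (g k) ^ 2) (stdGaussian d) := by
  refine (integrable_monomial (m3 i j k)).congr ?_
  filter_upwards with g
  exact (mono3_eq g i j k).symm

lemma integral_mono3 (i j k : Fin d) :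
    ∫ g, g i * g j * (g k) ^ 2 ∂(stdGaussian d)
      = if i = j then (if k = i then 3 else 1) else 0 := by
  have h : (fun g : EuclideanSpace ℝ (Fin d) => g i * g j * (g k) ^ 2)
      = fun g => ∏ l, (g l) ^ (m3 i j k l) := by
    funext g; exact mono3_eq g i j k
  rw [h, integral_monomial]
  by_cases hij : i = j
  · subst hij
    by_cases hki : k = i
    · subst hki
      simp only [if_pos rfl]
      have hm : ∀ l, gm (m3 k k k l) = if l = k then gm 4 else 1 := by
        intro l
        by_cases hl : l = k <;> simp [m3, hl, gm_zero]
      simp only [hm]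
      simp [Finset.prod_ite_eq', gm_four]
    · simp only [if_pos rfl, if_neg hki]
      have hm : ∀ l, gm (m3 i i k l) = 1 := by
        intro l
        by_cases hl : l = i <;> by_cases hlk : l = k <;>
          simp_all [m3, gm_zero, gm_two, gm_four]
      simp [hm]
  · rw [if_neg hij]
    refine Finset.prod_eq_zero (Finset.mem_univ i) ?_
    by_cases hik : i = k
    · subst hik
      simp [m3, hij, gm_three]
    · simp [m3, hij, hik, gm_one]

lemma norm_sq_eq (g : EuclideanSpace ℝ (Fin d)) : ‖g‖ ^ 2 = ∑ i, (g i) ^ 2 := by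
  rw [EuclideanSpace.norm_sq_eq]
  simp [sq_abs]

lemma inner_eq (g a : EuclideanSpace ℝ (Fin d)) :
    (inner ℝ g a : ℝ) = ∑ i, g i * a i := by
  simp [PiLp.inner_apply, RCLike.inner_apply, mul_comm]

lemma pow_sum_le (x : Fin d → ℝ) (hx : ∀ i, 0 ≤ x i) (n : ℕ) :
    (∑ i, x i) ^ (n + 1) ≤ (d : ℝ) ^ n * ∑ i, (x i) ^ (n + 1) := by
  have h := pow_sum_div_card_le_sum_pow (f := x) (s := Finset.univ)
    (fun i _ => hx i) n
  simp only [Finset.card_univ, Fintype.card_fin] at h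
  rcases Nat.eq_zero_or_pos d with hd | hd
  · subst hd
    simp
  · have hdpow : (0:ℝ) < (d:ℝ) ^ n := by positivity
    rw [div_le_iff₀ hdpow] at h
    calc (∑ i, x i) ^ (n+1) ≤ (∑ i, (x i) ^ (n+1)) * (d:ℝ) ^ n := h
      _ = (d : ℝ) ^ n * ∑ i, (x i) ^ (n + 1) := by ring

lemma norm_pow_le (g : EuclideanSpace ℝ (Fin d)) (n : ℕ) :
    ‖g‖ ^ (2 * (n + 1)) ≤ (d : ℝ) ^ n * ∑ i, (g i) ^ (2 * (n + 1)) := by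
  have h := pow_sum_le (fun i => (g i) ^ 2) (fun i => sq_nonneg _) n
  calc ‖g‖ ^ (2 * (n+1)) = (‖g‖ ^ 2) ^ (n+1) := by rw [← pow_mul]
    _ = (∑ i, (g i) ^ 2) ^ (n+1) := by rw [norm_sq_eq]
    _ ≤ (d : ℝ) ^ n * ∑ i, ((g i) ^ 2) ^ (n+1) := h
    _ = (d : ℝ) ^ n * ∑ i, (g i) ^ (2 * (n+1)) := by
        congr 1
        refine Finset.sum_congr rfl fun i _ => ?_
        rw [← pow_mul]

lemma integrable_sum_pow (k : ℕ) :
    Integrable (fun g : EuclideanSpace ℝ (Fin d) => ∑ i, (g i) ^ k) (stdGaussian d) :=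
  integrable_finset_sum _ (fun i _ => integrable_pow_eval i k)

lemma integrable_norm_pow (n : ℕ) :
    Integrable (fun g : EuclideanSpace ℝ (Fin d) => ‖g‖ ^ (2 * (n + 1))) (stdGaussian d) := by
  refine ((integrable_sum_pow (2 * (n+1))).const_mul ((d:ℝ) ^ n)).mono' ?_ ?_
  · exact ((continuous_norm.pow _).aestronglyMeasurable)
  · filter_upwards with g
    rw [Real.norm_eq_abs, abs_of_nonneg (by positivity)]
    exact norm_pow_le g n

lemma integral_sum_pow (k : ℕ) :
    ∫ g, ∑ i, (g i) ^ k ∂(stdGaussian d) = (d : ℝ) * gm k := by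
  rw [integral_finset_sum _ (fun i _ => integrable_pow_eval i k)]
  simp [integral_pow_eval, mul_comm]

lemma integral_norm_six_le :
    ∫ g, ‖g‖ ^ 6 ∂(stdGaussian d) ≤ 15 * (d : ℝ) ^ 3 := by
  have h1 : ∫ g, ‖g‖ ^ 6 ∂(stdGaussian d)
      ≤ ∫ g, (d:ℝ) ^ 2 * ∑ i, (g i) ^ 6 ∂(stdGaussian d) := by
    refine integral_mono (by simpa using integrable_norm_pow (d := d) 2)
      ((integrable_sum_pow 6).const_mul _) ?_
    intro g
    simpa using norm_pow_le g 2
  refine h1.trans ?_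
  rw [integral_const_mul, integral_sum_pow, gm_six]
  have : ((d:ℝ))^2 * ((d:ℝ) * 15) = 15 * (d:ℝ)^3 := by ring
  rw [this]

lemma sum_swap13 (f : Fin d → Fin d → Fin d → ℝ) :
    ∑ i, ∑ j, ∑ k, f i j k = ∑ i, ∑ j, ∑ k, f k j i := by
  let e : (Fin d × Fin d × Fin d) ≃ (Fin d × Fin d × Fin d) :=
    ⟨fun p => (p.2.2, p.2.1, p.1), fun p => (p.2.2, p.2.1, p.1),
      fun p => rfl, fun p => rfl⟩
  calc ∑ i, ∑ j, ∑ k, f i j k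
      = ∑ p : Fin d × Fin d × Fin d, f p.1 p.2.1 p.2.2 := by
        simp [Fintype.sum_prod_type]
    _ = ∑ p : Fin d × Fin d × Fin d, f p.2.2 p.2.1 p.1 :=
        Equiv.sum_comp e (fun q => f q.2.2 q.2.1 q.1)
    _ = ∑ i, ∑ j, ∑ k, f k j i := by
        simp [Fintype.sum_prod_type]

lemma expandP (a g : EuclideanSpace ℝ (Fin d)) :
    (inner ℝ g a : ℝ) ^ 2 * ‖g‖ ^ 2
      = ∑ p : Fin d × Fin d × Fin d,
          (a p.1 * a p.2.1) * (g p.1 * g p.2.1 * (g p.2.2) ^ 2) := by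
  rw [inner_eq, norm_sq_eq]
  have h1 : (∑ i, g i * a i) ^ 2 * (∑ i, (g i) ^ 2)
      = ∑ i, ∑ j, ∑ k, (g k * a k) * ((g j * a j) * (g i) ^ 2) := by
    simp only [sq, Finset.sum_mul, Finset.mul_sum]
    refine Finset.sum_congr rfl fun i _ => Finset.sum_congr rfl fun j _ =>
      Finset.sum_congr rfl fun k _ => by ring
  rw [h1, sum_swap13 (fun i j k => (g k * a k) * ((g j * a j) * (g i) ^ 2))]
  simp only [Fintype.sum_prod_type]
  refine Finset.sum_congr rfl fun i _ => Finset.sum_congr rfl fun j _ =>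
    Finset.sum_congr rfl fun k _ => by ring

lemma integrable_P (a : EuclideanSpace ℝ (Fin d)) :
    Integrable (fun g : EuclideanSpace ℝ (Fin d) => (inner ℝ g a : ℝ) ^ 2 * ‖g‖ ^ 2)
      (stdGaussian d) := by
  have h : (fun g : EuclideanSpace ℝ (Fin d) => (inner ℝ g a : ℝ) ^ 2 * ‖g‖ ^ 2)
      = fun g => ∑ p : Fin d × Fin d × Fin d,
          (a p.1 * a p.2.1) * (g p.1 * g p.2.1 * (g p.2.2) ^ 2) := by
    funext g; exact expandP a g
  rw [h]
  exact integrable_finset_sum _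
    (fun p _ => (integrable_mono3 p.1 p.2.1 p.2.2).const_mul _)

lemma integral_P (a : EuclideanSpace ℝ (Fin d)) :
    ∫ g, (inner ℝ g a : ℝ) ^ 2 * ‖g‖ ^ 2 ∂(stdGaussian d) = ((d:ℝ) + 2) * ‖a‖ ^ 2 := by
  have h : (fun g : EuclideanSpace ℝ (Fin d) => (inner ℝ g a : ℝ) ^ 2 * ‖g‖ ^ 2)
      = fun g => ∑ p : Fin d × Fin d × Fin d,
          (a p.1 * a p.2.1) * (g p.1 * g p.2.1 * (g p.2.2) ^ 2) := by
    funext g; exact expandP a g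
  rw [h, integral_finset_sum _
    (fun p _ => (integrable_mono3 p.1 p.2.1 p.2.2).const_mul _)]
  simp only [integral_const_mul, integral_mono3]
  rw [Fintype.sum_prod_type]
  have hk : ∀ i j : Fin d,
      (∑ q : Fin d × Fin d, (a i * a q.1) *
        (if i = q.1 then (if q.2 = i then (3:ℝ) else 1) else 0))
      = (a i * a i) * ((d:ℝ) + 2) := by
    intro i j
    rw [Fintype.sum_prod_type]
    have h1 : ∀ j' : Fin d, (∑ k, (a i * a j') *
        (if i = j' then (if k = i then (3:ℝ) else 1) else 0))
        = if i = j' then (a i * a j') * ((d:ℝ) + 2) else 0 := by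
      intro j'
      by_cases hij : i = j'
      · simp only [if_pos hij]
        rw [← Finset.mul_sum]
        congr 1
        have h2 : ∀ k : Fin d, ((if k = i then (3:ℝ) else 1))
            = (if k = i then (2:ℝ) else 0) + 1 := by
          intro k; split <;> norm_num
        rw [Finset.sum_congr rfl (fun k _ => h2 k), Finset.sum_add_distrib,
          Finset.sum_ite_eq' Finset.univ i (fun _ => (2:ℝ)), Finset.sum_const]
        simp [Finset.card_univ, add_comm]
      · simp [hij]
    rw [Finset.sum_congr rfl (fun j' _ => h1 j')]
    rw [Finset.sum_ite_eq Finset.univ i (fun j' => (a i * a j') * ((d:ℝ) + 2))]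
    simp
  rw [Finset.sum_congr rfl (fun i _ => hk i i)]
  rw [norm_sq_eq, Finset.mul_sum]
  refine Finset.sum_congr rfl fun i _ => by ring


end ESaux

open ESaux in

/-- Second moment of the isotropic ES estimator. -/
theorem second_moment_isotropic_ES
    (d : ℕ) (hd : 1 ≤ d) (L τ σ : ℝ) (hL : 0 < L) (hτ : 0 < τ) (hσ : 0 < σ)
    (F : EuclideanSpace ℝ (Fin d) → ℝ)
    (hdiff : Differentiable ℝ F)
    (hlip : ∀ x y : EuclideanSpace ℝ (Fin d), |F x - F y| ≤ L * ‖x - y‖)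
    (happrox : ∀ x g : EuclideanSpace ℝ (Fin d),
      |(F (x + σ • g) - F (x - σ • g)) / (2 * σ) - ⟪g, gradient F x⟫| ≤ τ * σ ^ 2 * ‖g‖ ^ 3)
    (θ : EuclideanSpace ℝ (Fin d))
    :
    |(∫ g, ‖((F (θ + σ • g) - F (θ - σ • g)) / (2 * σ)) • g‖ ^ 2 ∂(stdGaussian d)) - ((d : ℝ) + 2) * ‖gradient F θ‖ ^ 2|
      ≤ 30 * τ * σ ^ 2 * L * (d : ℝ) ^ 3 + 105 * τ ^ 2 * σ ^ 4 * (d : ℝ) ^ 4 := by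
  set a := gradient F θ with ha
  set v : EuclideanSpace ℝ (Fin d) → ℝ :=
    fun g => (F (θ + σ • g) - F (θ - σ • g)) / (2 * σ) with hv
  -- gradient norm bound
  have hlipF : LipschitzWith (Real.toNNReal L) F := by
    apply LipschitzWith.of_dist_le_mul
    intro x y
    rw [Real.dist_eq, dist_eq_norm]
    calc |F x - F y| ≤ L * ‖x - y‖ := hlip x y
      _ = (Real.toNNReal L : ℝ) * ‖x - y‖ := by
          rw [Real.coe_toNNReal _ hL.le]
  have hal : ‖a‖ ≤ L := by
    have h1 : ‖fderiv ℝ F θ‖ ≤ (Real.toNNReal L : ℝ) :=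
      norm_fderiv_le_of_lipschitz ℝ hlipF
    have h2 : ‖a‖ = ‖fderiv ℝ F θ‖ := by
      rw [ha, gradient]
      exact LinearIsometryEquiv.norm_map _ _
    rw [h2]
    rwa [Real.coe_toNNReal _ hL.le] at h1
  -- pointwise bound on v
  have hv_le : ∀ g : EuclideanSpace ℝ (Fin d), |v g| ≤ L * ‖g‖ := by
    intro g
    have h1 := hlip (θ + σ • g) (θ - σ • g)
    have h2 : (θ + σ • g) - (θ - σ • g) = (2 * σ) • g := by
      rw [two_mul, add_smul]
      abel
    rw [h2, norm_smul, Real.norm_eq_abs, abs_of_pos (by positivity : (0:ℝ) < 2 * σ)] at h1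
    rw [hv]
    rw [abs_div, abs_of_pos (by positivity : (0:ℝ) < 2 * σ), div_le_iff₀ (by positivity)]
    calc |F (θ + σ • g) - F (θ - σ • g)| ≤ L * (2 * σ * ‖g‖) := h1
      _ = L * ‖g‖ * (2 * σ) := by ring
  -- continuity of v
  have hFc : Continuous F := hdiff.continuous
  have hvc : Continuous v := by
    apply Continuous.div_const
    fun_prop
  -- main integrand
  have hmain_eq : ∀ g : EuclideanSpace ℝ (Fin d),
      ‖(v g) • g‖ ^ 2 = (v g) ^ 2 * ‖g‖ ^ 2 := by
    intro g
    rw [norm_smul, Real.norm_eq_abs, mul_pow, sq_abs]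
  have hint4 : Integrable (fun g : EuclideanSpace ℝ (Fin d) => ‖g‖ ^ 4) (stdGaussian d) := by
    simpa using integrable_norm_pow (d := d) 1
  have hint6 : Integrable (fun g : EuclideanSpace ℝ (Fin d) => ‖g‖ ^ 6) (stdGaussian d) := by
    simpa using integrable_norm_pow (d := d) 2
  have hmain_int : Integrable (fun g : EuclideanSpace ℝ (Fin d) => (v g) ^ 2 * ‖g‖ ^ 2)
      (stdGaussian d) := by
    refine (hint4.const_mul (L ^ 2)).mono' ?_ ?_
    · exact ((hvc.pow 2).mul (continuous_norm.pow 2)).aestronglyMeasurable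
    · filter_upwards with g
      rw [Real.norm_eq_abs, abs_of_nonneg (by positivity)]
      calc (v g) ^ 2 * ‖g‖ ^ 2 ≤ (L * ‖g‖) ^ 2 * ‖g‖ ^ 2 := by
            have : (v g) ^ 2 ≤ (L * ‖g‖) ^ 2 := by
              rw [← sq_abs (v g)]
              exact pow_le_pow_left₀ (abs_nonneg _) (hv_le g) 2
            exact mul_le_mul_of_nonneg_right this (by positivity)
        _ = L ^ 2 * ‖g‖ ^ 4 := by ring
  -- pointwise remainder bound
  have hR : ∀ g : EuclideanSpace ℝ (Fin d),
      |(v g) ^ 2 * ‖g‖ ^ 2 - (inner ℝ g a : ℝ) ^ 2 * ‖g‖ ^ 2|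
        ≤ 2 * L * (τ * σ ^ 2) * ‖g‖ ^ 6 := by
    intro g
    have h1 : |v g - ⟪g, a⟫| ≤ τ * σ ^ 2 * ‖g‖ ^ 3 := happrox θ g
    have h2 : |⟪g, a⟫| ≤ L * ‖g‖ := by
      calc |⟪g, a⟫| ≤ ‖g‖ * ‖a‖ := abs_real_inner_le_norm g a
        _ ≤ ‖g‖ * L := by
            exact mul_le_mul_of_nonneg_left hal (norm_nonneg g)
        _ = L * ‖g‖ := by ring
    have h3 : |v g + ⟪g, a⟫| ≤ 2 * L * ‖g‖ := by
      calc |v g + ⟪g, a⟫| ≤ |v g| + |⟪g, a⟫| := abs_add_le _ _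
        _ ≤ L * ‖g‖ + L * ‖g‖ := add_le_add (hv_le g) h2
        _ = 2 * L * ‖g‖ := by ring
    have key : (v g) ^ 2 * ‖g‖ ^ 2 - (inner ℝ g a : ℝ) ^ 2 * ‖g‖ ^ 2
        = ((v g - ⟪g, a⟫) * (v g + ⟪g, a⟫)) * ‖g‖ ^ 2 := by ring
    rw [key, abs_mul, abs_mul, abs_of_nonneg (by positivity : (0:ℝ) ≤ ‖g‖ ^ 2)]
    calc |v g - ⟪g, a⟫| * |v g + ⟪g, a⟫| * ‖g‖ ^ 2
        ≤ (τ * σ ^ 2 * ‖g‖ ^ 3) * (2 * L * ‖g‖) * ‖g‖ ^ 2 := by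
          refine mul_le_mul_of_nonneg_right ?_ (by positivity)
          exact mul_le_mul h1 h3 (abs_nonneg _) (by positivity)
      _ = 2 * L * (τ * σ ^ 2) * ‖g‖ ^ 6 := by ring
  -- assemble
  have hsub_int : Integrable
      (fun g : EuclideanSpace ℝ (Fin d) =>
        (v g) ^ 2 * ‖g‖ ^ 2 - (inner ℝ g a : ℝ) ^ 2 * ‖g‖ ^ 2) (stdGaussian d) :=
    hmain_int.sub (integrable_P a)
  have heq1 : (∫ g, ‖(v g) • g‖ ^ 2 ∂(stdGaussian d))
      = ∫ g, (v g) ^ 2 * ‖g‖ ^ 2 ∂(stdGaussian d) := by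
    congr 1; funext g; exact hmain_eq g
  have heq2 : (∫ g, (v g) ^ 2 * ‖g‖ ^ 2 ∂(stdGaussian d)) - ((d : ℝ) + 2) * ‖a‖ ^ 2
      = ∫ g, ((v g) ^ 2 * ‖g‖ ^ 2 - (inner ℝ g a : ℝ) ^ 2 * ‖g‖ ^ 2) ∂(stdGaussian d) := by
    rw [integral_sub hmain_int (integrable_P a), integral_P a]
  have hbound : |∫ g, ((v g) ^ 2 * ‖g‖ ^ 2 - (inner ℝ g a : ℝ) ^ 2 * ‖g‖ ^ 2) ∂(stdGaussian d)|
      ≤ 2 * L * (τ * σ ^ 2) * (15 * (d : ℝ) ^ 3) := by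
    have h1 : |∫ g, ((v g) ^ 2 * ‖g‖ ^ 2 - (inner ℝ g a : ℝ) ^ 2 * ‖g‖ ^ 2) ∂(stdGaussian d)|
        ≤ ∫ g, 2 * L * (τ * σ ^ 2) * ‖g‖ ^ 6 ∂(stdGaussian d) := by
      rw [← Real.norm_eq_abs]
      refine norm_integral_le_of_norm_le (hint6.const_mul _) ?_
      filter_upwards with g
      rw [Real.norm_eq_abs]
      exact hR g
    refine h1.trans ?_
    rw [integral_const_mul]
    refine mul_le_mul_of_nonneg_left (integral_norm_six_le) (by positivity)
  calc |(∫ g, ‖(v g) • g‖ ^ 2 ∂(stdGaussian d)) - ((d : ℝ) + 2) * ‖a‖ ^ 2|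
      = |∫ g, ((v g) ^ 2 * ‖g‖ ^ 2 - (inner ℝ g a : ℝ) ^ 2 * ‖g‖ ^ 2) ∂(stdGaussian d)| := by
        rw [heq1, heq2]
    _ ≤ 2 * L * (τ * σ ^ 2) * (15 * (d : ℝ) ^ 3) := hbound
    _ ≤ 30 * τ * σ ^ 2 * L * (d : ℝ) ^ 3 + 105 * τ ^ 2 * σ ^ 4 * (d : ℝ) ^ 4 := by
        have h105 : (0:ℝ) ≤ 105 * τ ^ 2 * σ ^ 4 * (d : ℝ) ^ 4 := by positivity
        nlinarith [h105]
end
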